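/- Let A be a binary string partitioned as a concatenation A = A₁ ++ A₂, and B a binary string. Then there exists a partition of B into a concatenation B = B₁ ++ B₂ such that LCS(A,B) = LCS(A₁,B₁) + LCS(A₂,B₂). -/

import Mathlib

/-- Length of the longest common subsequence of two binary strings. -/
def lcsLen (A B : List Bool) : ℕ :=
  ((A.sublists.filter (fun c => decide (c.Sublist B))).map List.length).foldr max 0

lemma le_foldr_max {a : ℕ} {l : List ℕ} (h : a ∈ l) : a ≤ l.foldr max 0 := by
  induction l with
  | nil => simp at h
  | cons b t ih =>
    rcases List.mem_cons.1 h with rfl | h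
    · exact le_max_left _ _
    · exact le_trans (ih h) (le_max_right _ _)

lemma foldr_max_mem (l : List ℕ) : l.foldr max 0 = 0 ∨ l.foldr max 0 ∈ l := by
  induction l with
  | nil => left; rfl
  | cons b t ih =>
    rcases le_or_gt b (t.foldr max 0) with h | h
    · rw [List.foldr_cons, max_eq_right h]
      rcases ih with h0 | hm
      · left; exact h0
      · right; exact List.mem_cons_of_mem _ hm
    · right
      rw [List.foldr_cons, max_eq_left h.le]
      exact List.mem_cons_self

lemma length_le_lcsLen {c A B : List Bool} (hA : c.Sublist A) (hB : c.Sublist B) :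
    c.length ≤ lcsLen A B := by
  apply le_foldr_max
  exact List.mem_map_of_mem (List.mem_filter.2 ⟨List.mem_sublists.2 hA, by simpa⟩)

lemma lcsLen_spec (A B : List Bool) :
    ∃ c : List Bool, c.Sublist A ∧ c.Sublist B ∧ c.length = lcsLen A B := by
  have h := foldr_max_mem ((A.sublists.filter (fun c => decide (c.Sublist B))).map List.length)
  rcases h with h0 | hm
  · exact ⟨[], List.nil_sublist _, List.nil_sublist _, h0.symm⟩
  · rcases List.mem_map.1 hm with ⟨c, hc, hlen⟩
    rcases List.mem_filter.1 hc with ⟨hcA, hcB⟩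
    exact ⟨c, List.mem_sublists.1 hcA, by simpa using hcB, hlen⟩

theorem lcs_split (A₁ A₂ B : List Bool) :
    ∃ B₁ B₂ : List Bool, B = B₁ ++ B₂ ∧
      lcsLen (A₁ ++ A₂) B = lcsLen A₁ B₁ + lcsLen A₂ B₂ := by
  obtain ⟨c, hcA, hcB, hclen⟩ := lcsLen_spec (A₁ ++ A₂) B
  obtain ⟨c₁, c₂, rfl, hc₁, hc₂⟩ := List.sublist_append_iff.1 hcA
  obtain ⟨B₁, B₂, rfl, hb₁, hb₂⟩ := List.append_sublist_iff.1 hcB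
  refine ⟨B₁, B₂, rfl, le_antisymm ?_ ?_⟩
  · rw [← hclen, List.length_append]
    exact Nat.add_le_add (length_le_lcsLen hc₁ hb₁) (length_le_lcsLen hc₂ hb₂)
  · obtain ⟨d₁, hd₁A, hd₁B, hd₁len⟩ := lcsLen_spec A₁ B₁
    obtain ⟨d₂, hd₂A, hd₂B, hd₂len⟩ := lcsLen_spec A₂ B₂
    calc lcsLen A₁ B₁ + lcsLen A₂ B₂ = (d₁ ++ d₂).length := by
          rw [List.length_append, hd₁len, hd₂len]
      _ ≤ lcsLen (A₁ ++ A₂) (B₁ ++ B₂) :=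
          length_le_lcsLen (List.Sublist.append hd₁A hd₂A)
            (List.Sublist.append hd₁B hd₂B)
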